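/- Let A_1,…,A_N be events, ξ = Σ_{i=1}^N 1_{A_i}, η = N − ξ. Then P(∪_{k=1}^N A_k) ≥ (1/N) Σ_{k=1}^N [ (E[η·1_{A_k}])² / E[η·ξ·1_{A_k}] + P(A_k) ], with the convention 0/0 = 0. -/

import Mathlib

open Finset MeasureTheory

/-- Cauchy–Schwarz for integrals. -/
lemma frolov_int_cs {Ω : Type*} [MeasurableSpace Ω] (P : Measure Ω) (f g : Ω → ℝ)
    (hf : Integrable (fun ω => f ω ^ 2) P) (hg : Integrable (fun ω => g ω ^ 2) P)
    (hfg : Integrable (fun ω => f ω * g ω) P) :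
    (∫ ω, f ω * g ω ∂P) ^ 2 ≤ (∫ ω, f ω ^ 2 ∂P) * (∫ ω, g ω ^ 2 ∂P) := by
  set B := ∫ ω, f ω ^ 2 ∂P with hB
  set C := ∫ ω, f ω * g ω ∂P with hC
  set A := ∫ ω, g ω ^ 2 ∂P with hA
  have key : ∀ t : ℝ, 0 ≤ B * (t * t) + (2 * C) * t + A := by
    intro t
    have h0 : 0 ≤ ∫ ω, (t * f ω + g ω) ^ 2 ∂P := integral_nonneg fun ω => sq_nonneg _
    have hexp : ∫ ω, (t * f ω + g ω) ^ 2 ∂P = B * (t * t) + (2 * C) * t + A := by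
      have heq : (fun ω => (t * f ω + g ω) ^ 2)
          = fun ω => (t * t) * f ω ^ 2 + (2 * t) * (f ω * g ω) + g ω ^ 2 := by
        funext ω; ring
      have h2 : Integrable (fun ω => (t * t) * f ω ^ 2) P := hf.const_mul _
      have h3 : Integrable (fun ω => (2 * t) * (f ω * g ω)) P := hfg.const_mul _
      have h1 : Integrable (fun ω => (t * t) * f ω ^ 2 + (2 * t) * (f ω * g ω)) P :=
        h2.add h3
      rw [heq, integral_add h1 hg, integral_add h2 h3,
        integral_const_mul, integral_const_mul, hB, hC, hA]
      ring
    linarith [hexp ▸ h0]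
  have hd := discrim_le_zero key
  rw [discrim] at hd
  nlinarith [hd]

theorem frolov_cor10 (Ω : Type*) [MeasurableSpace Ω]
    (P : Measure Ω) [IsProbabilityMeasure P]
    (N : ℕ) (A : ℕ → Set Ω) (hA : ∀ k, MeasurableSet (A k))
    (ξ η : Ω → ℝ)
    (hξ : ∀ ω, ξ ω = ∑ i ∈ Finset.Icc 1 N, Set.indicator (A i) (fun _ => (1 : ℝ)) ω)
    (hη : ∀ ω, η ω = N - ξ ω) :
    (P (⋃ k ∈ Finset.Icc 1 N, A k)).toReal
      ≥ (1 / (N : ℝ)) * ∑ k ∈ Finset.Icc 1 N,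
          ((∫ ω, η ω * Set.indicator (A k) (fun _ => (1 : ℝ)) ω ∂P) ^ 2
              / (∫ ω, η ω * ξ ω * Set.indicator (A k) (fun _ => (1 : ℝ)) ω ∂P)
            + (P (A k)).toReal) := by
  rcases Nat.eq_zero_or_pos N with hN0 | hNpos
  · subst hN0
    simp
  -- notation
  set ind : ℕ → Ω → ℝ := fun k => Set.indicator (A k) (fun _ => (1 : ℝ)) with hind
  set U : Set Ω := ⋃ k ∈ Finset.Icc 1 N, A k with hU
  have hUmeas : MeasurableSet U := by
    exact Finset.measurableSet_biUnion _ fun k _ => hA k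
  -- basic facts about indicators
  have hind_nonneg : ∀ k ω, 0 ≤ ind k ω := fun k ω =>
    Set.indicator_nonneg (fun _ _ => zero_le_one) ω
  have hind_le_one : ∀ k ω, ind k ω ≤ 1 := by
    intro k ω
    by_cases h : ω ∈ A k
    · exact le_of_eq (Set.indicator_of_mem h _)
    · exact (Set.indicator_of_notMem h _).le.trans zero_le_one
  have hind_meas : ∀ k, Measurable (ind k) := fun k =>
    measurable_const.indicator (hA k)
  -- measurability and bounds for ξ, η
  have hξfun : ξ = fun ω => ∑ i ∈ Finset.Icc 1 N, ind i ω := funext hξ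
  have hξmeas : Measurable ξ := by
    rw [hξfun]; exact Finset.measurable_sum _ fun i _ => hind_meas i
  have hηmeas : Measurable η := by
    have : η = fun ω => (N : ℝ) - ξ ω := funext hη
    rw [this]; exact measurable_const.sub hξmeas
  have hξ0 : ∀ ω, 0 ≤ ξ ω := fun ω => by
    rw [hξ ω]; exact Finset.sum_nonneg fun i _ => hind_nonneg i ω
  have hξN : ∀ ω, ξ ω ≤ N := fun ω => by
    rw [hξ ω]
    calc ∑ i ∈ Finset.Icc 1 N, ind i ω ≤ ∑ i ∈ Finset.Icc 1 N, 1 :=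
          Finset.sum_le_sum fun i _ => hind_le_one i ω
      _ = N := by simp
  have hη0 : ∀ ω, 0 ≤ η ω := fun ω => by rw [hη ω]; linarith [hξN ω]
  have hηN : ∀ ω, η ω ≤ N := fun ω => by rw [hη ω]; linarith [hξ0 ω]
  -- ξ ≥ 1 on each A k
  have hξ_one : ∀ k ∈ Finset.Icc 1 N, ∀ ω ∈ A k, 1 ≤ ξ ω := by
    intro k hk ω hω
    rw [hξ ω]
    have : ind k ω = 1 := Set.indicator_of_mem hω _
    calc (1 : ℝ) = ind k ω := this.symm
      _ ≤ ∑ i ∈ Finset.Icc 1 N, ind i ω :=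
          Finset.single_le_sum (fun i _ => hind_nonneg i ω) hk
  -- ξ = 0 or ξ ≥ 1
  have hξ01 : ∀ ω, ξ ω = 0 ∨ 1 ≤ ξ ω := by
    intro ω
    by_cases h : ∃ i ∈ Finset.Icc 1 N, ω ∈ A i
    · obtain ⟨i, hi, hωi⟩ := h
      right
      rw [hξ ω]
      have : ind i ω = 1 := Set.indicator_of_mem hωi _
      calc (1 : ℝ) = ind i ω := this.symm
        _ ≤ _ := Finset.single_le_sum (fun j _ => hind_nonneg j ω) hi
    · left
      rw [hξ ω]
      refine Finset.sum_eq_zero fun i hi => ?_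
      have : ω ∉ A i := fun hmem => h ⟨i, hi, hmem⟩
      exact Set.indicator_of_notMem this _
  have hdiv_le : ∀ ω, η ω / ξ ω ≤ N := by
    intro ω
    rcases hξ01 ω with h | h
    · rw [h, div_zero]; positivity
    · exact (div_le_self (hη0 ω) h).trans (hηN ω)
  have hdiv_nonneg : ∀ ω, 0 ≤ η ω / ξ ω := fun ω => div_nonneg (hη0 ω) (hξ0 ω)
  -- integrability helper
  have hint : ∀ (f : Ω → ℝ) (C : ℝ), Measurable f → (∀ ω, |f ω| ≤ C) → Integrable f P :=
    fun f C hm hb =>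
      (integrable_const C).mono' hm.aestronglyMeasurable (ae_of_all _ fun ω => by
        simpa [Real.norm_eq_abs] using hb ω)
  have hint_div : ∀ k, Integrable (fun ω => η ω / ξ ω * ind k ω) P := by
    intro k
    refine hint _ (N : ℝ) ((hηmeas.div hξmeas).mul (hind_meas k)) fun ω => ?_
    rw [abs_of_nonneg (mul_nonneg (hdiv_nonneg ω) (hind_nonneg k ω))]
    calc η ω / ξ ω * ind k ω ≤ (N : ℝ) * 1 :=
          mul_le_mul (hdiv_le ω) (hind_le_one k ω) (hind_nonneg k ω) (by positivity)
      _ = N := mul_one _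
  have hint_ηind : ∀ k, Integrable (fun ω => η ω * ind k ω) P := by
    intro k
    refine hint _ (N : ℝ) (hηmeas.mul (hind_meas k)) fun ω => ?_
    rw [abs_of_nonneg (mul_nonneg (hη0 ω) (hind_nonneg k ω))]
    calc η ω * ind k ω ≤ (N : ℝ) * 1 :=
          mul_le_mul (hηN ω) (hind_le_one k ω) (hind_nonneg k ω) (by positivity)
      _ = N := mul_one _
  have hint_ηξind : ∀ k, Integrable (fun ω => η ω * ξ ω * ind k ω) P := by
    intro k
    refine hint _ ((N : ℝ) * N) ((hηmeas.mul hξmeas).mul (hind_meas k)) fun ω => ?_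
    rw [abs_of_nonneg (mul_nonneg (mul_nonneg (hη0 ω) (hξ0 ω)) (hind_nonneg k ω))]
    calc η ω * ξ ω * ind k ω ≤ (N : ℝ) * N * 1 := by
          apply mul_le_mul _ (hind_le_one k ω) (hind_nonneg k ω) (by positivity)
          exact mul_le_mul (hηN ω) (hξN ω) (hξ0 ω) (by positivity)
      _ = (N : ℝ) * N := mul_one _
  -- Cauchy–Schwarz per k
  have key : ∀ k ∈ Finset.Icc 1 N,
      (∫ ω, η ω * ind k ω ∂P) ^ 2 / (∫ ω, η ω * ξ ω * ind k ω ∂P)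
        ≤ ∫ ω, η ω / ξ ω * ind k ω ∂P := by
    intro k hk
    set F : Ω → ℝ := fun ω => Real.sqrt (η ω * ξ ω) * ind k ω with hF
    set G : Ω → ℝ := fun ω => Real.sqrt (η ω / ξ ω) * ind k ω with hG
    have hFsq : (fun ω => F ω ^ 2) = fun ω => η ω * ξ ω * ind k ω := by
      funext ω
      by_cases h : ω ∈ A k
      · have h1 : ind k ω = 1 := Set.indicator_of_mem h _
        simp only [hF, h1, mul_one]
        exact Real.sq_sqrt (mul_nonneg (hη0 ω) (hξ0 ω))
      · have h1 : ind k ω = 0 := Set.indicator_of_notMem h _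
        simp [hF, h1]
    have hGsq : (fun ω => G ω ^ 2) = fun ω => η ω / ξ ω * ind k ω := by
      funext ω
      by_cases h : ω ∈ A k
      · have h1 : ind k ω = 1 := Set.indicator_of_mem h _
        simp only [hG, h1, mul_one]
        exact Real.sq_sqrt (hdiv_nonneg ω)
      · have h1 : ind k ω = 0 := Set.indicator_of_notMem h _
        simp [hG, h1]
    have hFG : (fun ω => F ω * G ω) = fun ω => η ω * ind k ω := by
      funext ω
      by_cases h : ω ∈ A k
      · have h1 : ind k ω = 1 := Set.indicator_of_mem h _
        have hξpos : (0 : ℝ) < ξ ω := lt_of_lt_of_le one_pos (hξ_one k hk ω h)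
        simp only [hF, hG, h1, mul_one]
        rw [← Real.sqrt_mul (mul_nonneg (hη0 ω) (hξ0 ω))]
        have : η ω * ξ ω * (η ω / ξ ω) = η ω * η ω := by
          field_simp
        rw [this, Real.sqrt_mul_self (hη0 ω)]
      · have h1 : ind k ω = 0 := Set.indicator_of_notMem h _
        simp [hF, hG, h1]
    have hcs := frolov_int_cs P F G (by rw [hFsq]; exact hint_ηξind k)
      (by rw [hGsq]; exact hint_div k) (by rw [hFG]; exact hint_ηind k)
    rw [hFsq, hGsq, hFG] at hcs
    set b := ∫ ω, η ω * ξ ω * ind k ω ∂P with hb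
    have hbnn : (0 : ℝ) ≤ b := by
      rw [hb]
      exact integral_nonneg fun ω =>
        mul_nonneg (mul_nonneg (hη0 ω) (hξ0 ω)) (hind_nonneg k ω)
    rcases eq_or_lt_of_le hbnn with hb0 | hbpos
    · rw [← hb0, div_zero]
      exact integral_nonneg fun ω => mul_nonneg (hdiv_nonneg ω) (hind_nonneg k ω)
    · rw [div_le_iff₀ hbpos]
      linarith [hcs]
  -- sum of the division terms
  have hsum_div : ∑ k ∈ Finset.Icc 1 N, ∫ ω, η ω / ξ ω * ind k ω ∂P
      = ∫ ω, η ω * Set.indicator U (fun _ => (1 : ℝ)) ω ∂P := by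
    rw [← integral_finset_sum _ fun k _ => hint_div k]
    congr 1
    funext ω
    by_cases h : ω ∈ U
    · obtain ⟨k, hk, hωk⟩ := Set.mem_iUnion₂.mp h
      have hξpos : (0 : ℝ) < ξ ω := lt_of_lt_of_le one_pos (hξ_one k hk ω hωk)
      have hξω : ξ ω = ∑ i ∈ Finset.Icc 1 N, ind i ω := hξ ω
      rw [← Finset.mul_sum, ← hξω, div_mul_cancel₀ _ (ne_of_gt hξpos),
        Set.indicator_of_mem h, mul_one]
    · have hξzero : ξ ω = 0 := by
        rw [hξ ω]
        refine Finset.sum_eq_zero fun i hi => ?_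
        refine Set.indicator_of_notMem (fun hmem => h ?_) _
        exact Set.mem_biUnion hi hmem
      have : ∀ i ∈ Finset.Icc 1 N, η ω / ξ ω * ind i ω = 0 := by
        intro i hi
        refine mul_eq_zero_of_right _ (Set.indicator_of_notMem (fun hmem => h ?_) _)
        exact Set.mem_biUnion hi hmem
      rw [Finset.sum_eq_zero this, Set.indicator_of_notMem h, mul_zero]
  -- sum of the probabilities
  have hsum_prob : ∑ k ∈ Finset.Icc 1 N, (P (A k)).toReal = ∫ ω, ξ ω ∂P := by
    have : ∀ k ∈ Finset.Icc 1 N, (P (A k)).toReal = ∫ ω, ind k ω ∂P :=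
      fun k _ => (integral_indicator_one (hA k)).symm
    rw [Finset.sum_congr rfl this, ← integral_finset_sum _ fun k _ =>
      hint _ 1 (hind_meas k) fun ω => by
        rw [abs_of_nonneg (hind_nonneg k ω)]; exact hind_le_one k ω]
    exact integral_congr_ae (ae_of_all _ fun ω => (hξ ω).symm)
  -- combine the two integrals
  have hcomb : (∫ ω, η ω * Set.indicator U (fun _ => (1 : ℝ)) ω ∂P) + ∫ ω, ξ ω ∂P
      = (N : ℝ) * (P U).toReal := by
    have hintU : Integrable (fun ω => η ω * Set.indicator U (fun _ => (1 : ℝ)) ω) P := by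
      refine hint _ (N : ℝ) (hηmeas.mul (measurable_const.indicator hUmeas)) fun ω => ?_
      have h0 : 0 ≤ Set.indicator U (fun _ => (1 : ℝ)) ω :=
        Set.indicator_nonneg (fun _ _ => zero_le_one) ω
      have h1 : Set.indicator U (fun _ => (1 : ℝ)) ω ≤ 1 := by
        by_cases h : ω ∈ U <;> simp [Set.indicator, h]
      rw [abs_of_nonneg (mul_nonneg (hη0 ω) h0)]
      calc η ω * Set.indicator U (fun _ => (1 : ℝ)) ω ≤ (N : ℝ) * 1 :=
            mul_le_mul (hηN ω) h1 h0 (by positivity)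
        _ = N := mul_one _
    have hintξ : Integrable ξ P := hint _ (N : ℝ) hξmeas fun ω => by
      rw [abs_of_nonneg (hξ0 ω)]; exact hξN ω
    rw [← integral_add hintU hintξ]
    have heq : (fun ω => η ω * Set.indicator U (fun _ => (1 : ℝ)) ω + ξ ω)
        = fun ω => (N : ℝ) * Set.indicator U (fun _ => (1 : ℝ)) ω := by
      funext ω
      by_cases h : ω ∈ U
      · rw [Set.indicator_of_mem h, hη ω]
        ring
      · have hξzero : ξ ω = 0 := by
          rw [hξ ω]
          refine Finset.sum_eq_zero fun i hi => ?_
          exact Set.indicator_of_notMem (fun hmem => h (Set.mem_biUnion hi hmem)) _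
        rw [Set.indicator_of_notMem h, hξzero]
        ring
    rw [heq, integral_const_mul]
    congr 1
    have : Set.indicator U (fun _ => (1 : ℝ)) = U.indicator 1 := rfl
    rw [this, integral_indicator_one hUmeas, measureReal_def]
  -- final computation
  have hNne : (N : ℝ) ≠ 0 := Nat.cast_ne_zero.mpr hNpos.ne'
  have hstep : ∑ k ∈ Finset.Icc 1 N,
      ((∫ ω, η ω * ind k ω ∂P) ^ 2 / (∫ ω, η ω * ξ ω * ind k ω ∂P) + (P (A k)).toReal)
      ≤ (N : ℝ) * (P U).toReal := by
    calc ∑ k ∈ Finset.Icc 1 N,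
        ((∫ ω, η ω * ind k ω ∂P) ^ 2 / (∫ ω, η ω * ξ ω * ind k ω ∂P) + (P (A k)).toReal)
        ≤ ∑ k ∈ Finset.Icc 1 N, ((∫ ω, η ω / ξ ω * ind k ω ∂P) + (P (A k)).toReal) :=
          Finset.sum_le_sum fun k hk => add_le_add_left (key k hk) _
      _ = (∑ k ∈ Finset.Icc 1 N, ∫ ω, η ω / ξ ω * ind k ω ∂P)
          + ∑ k ∈ Finset.Icc 1 N, (P (A k)).toReal := Finset.sum_add_distrib
      _ = (N : ℝ) * (P U).toReal := by rw [hsum_div, hsum_prob, hcomb]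
  have : (1 / (N : ℝ)) * ∑ k ∈ Finset.Icc 1 N,
      ((∫ ω, η ω * ind k ω ∂P) ^ 2 / (∫ ω, η ω * ξ ω * ind k ω ∂P) + (P (A k)).toReal)
      ≤ (P U).toReal := by
    rw [div_mul_eq_mul_div, one_mul, div_le_iff₀ (by positivity : (0 : ℝ) < N)]
    calc _ ≤ (N : ℝ) * (P U).toReal := hstep
      _ = (P U).toReal * N := mul_comm _ _
  exact this
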